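/- For all nonnegative integers n and r, (r+1)! * C_{n,r} = ∑_{k=0}^{r} (-1)^k (2n-2k+1) * binom(n+5/12, k) * binom(n-k-5/12, r-k) * k! * (r-k)!, where C_{n,r} = (-1)^r * binom(n+5/12, r+1) + binom(n+7/12, r+1) and binom(x, m) = x(x-1)...(x-m+1)/m! is the generalized binomial coefficient for real x. -/

import Mathlib

open Finset

/-- Generalized binomial coefficient `binom(x, m) = x(x-1)⋯(x-m+1)/m!` for rational `x`. -/
noncomputable def genBinom (x : ℚ) (m : ℕ) : ℚ :=
  (∏ i ∈ Finset.range m, (x - (i : ℚ))) / (m.factorial : ℚ)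

/-- `C_{n,r} = (-1)^r * binom(n+5/12, r+1) + binom(n+7/12, r+1)`. -/
noncomputable def Cnr (n r : ℕ) : ℚ :=
  (-1 : ℚ) ^ r * genBinom ((n : ℚ) + 5 / 12) (r + 1) + genBinom ((n : ℚ) + 7 / 12) (r + 1)

/-- Falling-factorial style product `x(x-1)⋯(x-m+1)`. -/
noncomputable def FF (x : ℚ) (m : ℕ) : ℚ := ∏ i ∈ Finset.range m, (x - (i : ℚ))

lemma FF_succ (x : ℚ) (m : ℕ) : FF x (m + 1) = FF x m * (x - m) :=
  Finset.prod_range_succ _ _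

lemma FF_zero (x : ℚ) : FF x 0 = 1 := Finset.prod_range_zero _

lemma genBinom_eq (x : ℚ) (m : ℕ) : genBinom x m = FF x m / (m.factorial : ℚ) := rfl

lemma key (n r : ℕ) :
    (-1 : ℚ) ^ r * FF ((n : ℚ) + 5 / 12) (r + 1) + FF ((n : ℚ) + 7 / 12) (r + 1) =
      ∑ k ∈ Finset.range (r + 1),
        (-1 : ℚ) ^ k * (2 * (n : ℚ) - 2 * (k : ℚ) + 1) *
          FF ((n : ℚ) + 5 / 12) k * FF ((n : ℚ) - (k : ℚ) - 5 / 12) (r - k) := by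
  induction r with
  | zero => simp [FF]; ring
  | succ r ih =>
    rw [Finset.sum_range_succ]
    have hsum : ∑ k ∈ Finset.range (r + 1),
        (-1 : ℚ) ^ k * (2 * (n : ℚ) - 2 * (k : ℚ) + 1) *
          FF ((n : ℚ) + 5 / 12) k * FF ((n : ℚ) - (k : ℚ) - 5 / 12) (r + 1 - k)
        = ((n : ℚ) - r - 5 / 12) * ∑ k ∈ Finset.range (r + 1),
            (-1 : ℚ) ^ k * (2 * (n : ℚ) - 2 * (k : ℚ) + 1) *
              FF ((n : ℚ) + 5 / 12) k * FF ((n : ℚ) - (k : ℚ) - 5 / 12) (r - k) := by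
      rw [Finset.mul_sum]
      refine Finset.sum_congr rfl fun k hk => ?_
      have hk' : k ≤ r := Nat.lt_succ_iff.mp (Finset.mem_range.mp hk)
      have h1 : r + 1 - k = (r - k) + 1 := by omega
      have hc : ((r - k : ℕ) : ℚ) = (r : ℚ) - (k : ℚ) := by
        push_cast [Nat.cast_sub hk']; ring
      rw [h1, FF_succ, hc]
      ring
    rw [hsum, ← ih]
    simp only [FF_succ, Nat.sub_self, FF_zero]
    push_cast
    ring

theorem factorial_mul_Cnr_eq_sum (n r : ℕ) :
    ((r + 1).factorial : ℚ) * Cnr n r =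
      ∑ k ∈ Finset.range (r + 1),
        (-1 : ℚ) ^ k * (2 * (n : ℚ) - 2 * (k : ℚ) + 1) *
          genBinom ((n : ℚ) + 5 / 12) k * genBinom ((n : ℚ) - (k : ℚ) - 5 / 12) (r - k) *
          (k.factorial : ℚ) * ((r - k).factorial : ℚ) := by
  have hfac : ∀ m : ℕ, (m.factorial : ℚ) ≠ 0 :=
    fun m => Nat.cast_ne_zero.mpr m.factorial_ne_zero
  calc ((r + 1).factorial : ℚ) * Cnr n r
      = (-1 : ℚ) ^ r * FF ((n : ℚ) + 5 / 12) (r + 1) + FF ((n : ℚ) + 7 / 12) (r + 1) := by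
        simp only [Cnr, genBinom_eq]
        field_simp
    _ = ∑ k ∈ Finset.range (r + 1),
        (-1 : ℚ) ^ k * (2 * (n : ℚ) - 2 * (k : ℚ) + 1) *
          FF ((n : ℚ) + 5 / 12) k * FF ((n : ℚ) - (k : ℚ) - 5 / 12) (r - k) := key n r
    _ = _ := by
        refine Finset.sum_congr rfl fun k _ => ?_
        simp only [genBinom_eq]
        field_simp
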